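/- Let L be the linear functional on polynomials with moments μ_s, all of whose Hankel determinants H(n) = det_{0≤i,j≤n−1}(μ_{i+j}) are nonzero, and let (p_n) be the corresponding monic orthogonal polynomials. Then for all non-negative integers m and n, and variables x_1,…,x_m: det_{0≤i,j≤n−1}( L(x^{i+j} ∏_{ℓ=1}^m (x − x_ℓ)) ) / det_{0≤i,j≤n−1}(μ_{i+j}) = (−1)^{nm} det_{1≤i,j≤m}( p_{n+j−1}(x_i) ) / ∏_{1≤i<j≤m}(x_j − x_i). -/

import Mathlib

open Polynomial Matrix

namespace HankelAux

variable {K : Type*} [Field K]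

theorem p_zero (p : ℕ → Polynomial K) (hmonic : ∀ n, (p n).Monic)
    (hdeg : ∀ n, (p n).natDegree = n) : p 0 = 1 :=
  ((hmonic 0).natDegree_eq_zero).mp (hdeg 0)

theorem L_mul_p_le (L : Polynomial K →ₗ[K] K) (p : ℕ → Polynomial K) (ω : ℕ → K)
    (hmonic : ∀ n, (p n).Monic) (hdeg : ∀ n, (p n).natDegree = n)
    (horth : ∀ m' n', L (p m' * p n') = if m' = n' then ω n' else 0) :
    ∀ (k : ℕ) (q : Polynomial K) (t : ℕ), q.natDegree ≤ k → k < t → L (q * p t) = 0 := by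
  intro k
  induction k with
  | zero =>
    intro q t hq ht
    rw [Polynomial.eq_C_of_natDegree_le_zero hq, ← smul_eq_C_mul, LinearMap.map_smul]
    have hpt : L (p t) = 0 := by
      have h := horth 0 t
      rw [p_zero p hmonic hdeg, one_mul, if_neg (Nat.ne_of_lt ht)] at h
      exact h
    rw [hpt, smul_zero]
  | succ k ih =>
    intro q t hq ht
    set c := q.coeff (k + 1) with hc
    have hcoeff : (p (k + 1)).coeff (k + 1) = 1 := by
      have h := (hmonic (k + 1)).coeff_natDegree
      rwa [hdeg] at h
    have hdeg' : (q - C c * p (k + 1)).natDegree ≤ k := by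
      rw [Polynomial.natDegree_le_iff_coeff_eq_zero]
      intro N hN
      rw [Polynomial.coeff_sub, Polynomial.coeff_C_mul]
      rcases eq_or_lt_of_le (Nat.succ_le_of_lt hN) with h | h
      · rw [← h, hcoeff, mul_one, ← hc, sub_self]
      · rw [Polynomial.coeff_eq_zero_of_natDegree_lt (lt_of_le_of_lt hq h),
          Polynomial.coeff_eq_zero_of_natDegree_lt (by rw [hdeg]; exact h),
          mul_zero, sub_zero]
    have h1 : L ((q - C c * p (k + 1)) * p t) = 0 := ih _ t hdeg' (Nat.lt_of_succ_lt ht)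
    have h2 : L (C c * p (k + 1) * p t) = 0 := by
      rw [mul_assoc, ← smul_eq_C_mul, LinearMap.map_smul, horth, if_neg (Nat.ne_of_lt ht), smul_zero]
    have hsplit : q * p t = (q - C c * p (k + 1)) * p t + C c * p (k + 1) * p t := by ring
    rw [hsplit, map_add, h1, h2, add_zero]

theorem L_q_p (L : Polynomial K →ₗ[K] K) (p : ℕ → Polynomial K) (ω : ℕ → K)
    (hmonic : ∀ n, (p n).Monic) (hdeg : ∀ n, (p n).natDegree = n)
    (horth : ∀ m' n', L (p m' * p n') = if m' = n' then ω n' else 0)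
    (q : Polynomial K) (t : ℕ) (h : q.natDegree < t) : L (q * p t) = 0 :=
  L_mul_p_le L p ω hmonic hdeg horth q.natDegree q t le_rfl h

theorem L_X_pow_p (L : Polynomial K →ₗ[K] K) (p : ℕ → Polynomial K) (ω : ℕ → K)
    (hmonic : ∀ n, (p n).Monic) (hdeg : ∀ n, (p n).natDegree = n)
    (horth : ∀ m' n', L (p m' * p n') = if m' = n' then ω n' else 0)
    (i : ℕ) : L (X ^ i * p i) = ω i := by
  have h2 : L (p i * p i) = ω i := by rw [horth, if_pos rfl]
  have hsplit : (X : Polynomial K) ^ i * p i = (X ^ i - p i) * p i + p i * p i := by ring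
  rw [hsplit, map_add, h2]
  rcases Nat.eq_zero_or_pos i with rfl | hi
  · rw [p_zero p hmonic hdeg]
    simp
  · have hcoeff : (p i).coeff i = 1 := by
      have h := (hmonic i).coeff_natDegree
      rwa [hdeg] at h
    have hlt : (X ^ i - p i : Polynomial K).natDegree < i := by
      have hle : (X ^ i - p i : Polynomial K).natDegree ≤ i - 1 := by
        rw [Polynomial.natDegree_le_iff_coeff_eq_zero]
        intro N hN
        have hiN : i ≤ N := by omega
        rw [Polynomial.coeff_sub, Polynomial.coeff_X_pow]
        rcases eq_or_lt_of_le hiN with h | h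
        · rw [if_pos h.symm, ← h, hcoeff, sub_self]
        · rw [if_neg (by omega),
            Polynomial.coeff_eq_zero_of_natDegree_lt (by rw [hdeg]; exact h), sub_zero]
      omega
    rw [L_q_p L p ω hmonic hdeg horth _ i hlt, zero_add]

theorem L_expand (L : Polynomial K →ₗ[K] K) (N a : ℕ) (q : Polynomial K) (h : q.natDegree < N) :
    L (X ^ a * q) = ∑ s ∈ Finset.range N, q.coeff s * L (X ^ (a + s)) := by
  conv_lhs => rw [q.as_sum_range' N h]
  rw [Finset.mul_sum, map_sum]
  refine Finset.sum_congr rfl fun s _ => ?_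
  have hmono : (X : Polynomial K) ^ a * (monomial s) (q.coeff s) = q.coeff s • X ^ (a + s) := by
    rw [← C_mul_X_pow_eq_monomial, smul_eq_C_mul, pow_add]; ring
  rw [hmono, LinearMap.map_smul, smul_eq_mul]

theorem L_expand' (L : Polynomial K →ₗ[K] K) (N : ℕ) (q r : Polynomial K)
    (h : q.natDegree < N) :
    L (q * r) = ∑ s ∈ Finset.range N, q.coeff s * L (X ^ s * r) := by
  conv_lhs => rw [q.as_sum_range' N h]
  rw [Finset.sum_mul, map_sum]
  refine Finset.sum_congr rfl fun s _ => ?_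
  have hmono : ((monomial s) (q.coeff s)) * r = q.coeff s • (X ^ s * r) := by
    rw [← C_mul_X_pow_eq_monomial, smul_eq_C_mul]; ring
  rw [hmono, LinearMap.map_smul, smul_eq_mul]

/-- degree function on the sum index type -/
def dd (m n : ℕ) : Fin m ⊕ Fin n → ℕ := Sum.elim (fun i => (i : ℕ)) (fun j => m + (j : ℕ))

/-- rotated degree function -/
def dd' (m n : ℕ) : Fin m ⊕ Fin n → ℕ := Sum.elim (fun i => n + (i : ℕ)) (fun j => (j : ℕ))

theorem dd_eq (m n : ℕ) (c : Fin m ⊕ Fin n) : dd m n c = ((finSumFinEquiv c : Fin (m + n)) : ℕ) := by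
  cases c <;> simp [dd]

theorem dd_lt (m n : ℕ) (c : Fin m ⊕ Fin n) : dd m n c < m + n := by
  rw [dd_eq]; exact (finSumFinEquiv c).isLt

theorem sum_dd {M : Type*} [AddCommMonoid M] (m n : ℕ) (f : ℕ → M) :
    ∑ c : Fin m ⊕ Fin n, f (dd m n c) = ∑ s ∈ Finset.range (m + n), f s := by
  rw [← Fin.sum_univ_eq_sum_range]
  exact Fintype.sum_equiv finSumFinEquiv _ _ (fun c => by rw [dd_eq])

theorem eval_dd (m n : ℕ) (q : Polynomial K) (h : q.natDegree < m + n) (z : K) :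
    ∑ c : Fin m ⊕ Fin n, z ^ dd m n c * q.coeff (dd m n c) = q.eval z := by
  rw [sum_dd m n (fun s => z ^ s * q.coeff s), eval_eq_sum_range' h]
  exact Finset.sum_congr rfl fun s _ => mul_comm _ _

theorem L_dd (m n : ℕ) (L : Polynomial K →ₗ[K] K) (a : ℕ) (q : Polynomial K)
    (h : q.natDegree < m + n) :
    ∑ c : Fin m ⊕ Fin n, L (X ^ (a + dd m n c)) * q.coeff (dd m n c) = L (X ^ a * q) := by
  rw [sum_dd m n (fun s => L (X ^ (a + s)) * q.coeff s), L_expand L (m + n) a q h]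
  exact Finset.sum_congr rfl fun s _ => mul_comm _ _


noncomputable def Fmat (m n : ℕ) (x : Fin m → K) (L : Polynomial K →ₗ[K] K) :
    Matrix (Fin m ⊕ Fin n) (Fin m ⊕ Fin n) K :=
  fun r c => Sum.elim (fun i => x i ^ dd m n c) (fun i => L (X ^ ((i : ℕ) + dd m n c))) r

noncomputable def Tmat (m n : ℕ) (π : Polynomial K) : Matrix (Fin m ⊕ Fin n) (Fin m ⊕ Fin n) K :=
  fun r c => Sum.elim (fun j : Fin m => if r = Sum.inl j then (1 : K) else 0)
    (fun j : Fin n => (X ^ (j : ℕ) * π).coeff (dd m n r)) c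

noncomputable def Umat (m n : ℕ) (p : ℕ → Polynomial K) : Matrix (Fin m ⊕ Fin n) (Fin m ⊕ Fin n) K :=
  fun r c => (p (dd m n c)).coeff (dd m n r)

noncomputable def Urot (m n : ℕ) (p : ℕ → Polynomial K) : Matrix (Fin m ⊕ Fin n) (Fin m ⊕ Fin n) K :=
  fun r c => (p (dd' m n c)).coeff (dd m n r)

theorem FT_eq (m n : ℕ) (x : Fin m → K) (L : Polynomial K →ₗ[K] K) (π : Polynomial K)
    (hπd : π.natDegree ≤ m) (hπ0 : ∀ i, π.eval (x i) = 0) :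
    Fmat m n x L * Tmat m n π =
      fromBlocks (vandermonde x) 0
        (of fun (i : Fin n) (j : Fin m) => L (X ^ ((i : ℕ) + (j : ℕ))))
        (of fun i j : Fin n => L (X ^ ((i : ℕ) + (j : ℕ)) * π)) := by
  have hdegq : ∀ j : Fin n, ((X : Polynomial K) ^ (j : ℕ) * π).natDegree < m + n := by
    intro j
    have hj := j.isLt
    have h1 : ((X : Polynomial K) ^ (j : ℕ) * π).natDegree ≤ (j : ℕ) + m := by
      refine natDegree_mul_le.trans ?_
      rw [natDegree_X_pow]
      omega
    omega
  ext r c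
  cases c with
  | inl j =>
    rw [Matrix.mul_apply]
    have hsum : ∀ c' : Fin m ⊕ Fin n, Fmat m n x L r c' * Tmat m n π c' (Sum.inl j)
        = if c' = Sum.inl j then Fmat m n x L r c' else 0 := by
      intro c'
      show Fmat m n x L r c' * (if c' = Sum.inl j then (1:K) else 0) = _
      split <;> simp
    rw [Finset.sum_congr rfl fun c' _ => hsum c', Finset.sum_ite_eq' Finset.univ (Sum.inl j)]
    rw [if_pos (Finset.mem_univ _)]
    cases r with
    | inl i => rfl
    | inr i => rfl
  | inr j =>
    rw [Matrix.mul_apply]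
    cases r with
    | inl i =>
      have hs : ∑ c', Fmat m n x L (Sum.inl i) c' * Tmat m n π c' (Sum.inr j)
          = ((X : Polynomial K) ^ (j : ℕ) * π).eval (x i) :=
        eval_dd m n _ (hdegq j) (x i)
      rw [hs, eval_mul, hπ0 i, mul_zero]
      simp
    | inr i =>
      have hs : ∑ c', Fmat m n x L (Sum.inr i) c' * Tmat m n π c' (Sum.inr j)
          = L (X ^ (i : ℕ) * (X ^ (j : ℕ) * π)) :=
        L_dd m n L (i : ℕ) _ (hdegq j)
      rw [hs, show (X : Polynomial K) ^ (i : ℕ) * (X ^ (j : ℕ) * π)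
          = X ^ ((i : ℕ) + (j : ℕ)) * π by rw [← mul_assoc, ← pow_add]]
      simp

theorem det_Tmat (m n : ℕ) (π : Polynomial K) (hπm : π.Monic) (hπd : π.natDegree = m) :
    (Tmat m n π).det = 1 := by
  rw [← Matrix.det_submatrix_equiv_self
    (finSumFinEquiv (m := m) (n := n)).symm (Tmat m n π)]
  have hdd : ∀ i : Fin (m + n), dd m n (finSumFinEquiv.symm i) = (i : ℕ) := by
    intro i; rw [dd_eq, Equiv.apply_symm_apply]
  have hXjd : ∀ j : Fin n, ((X : Polynomial K) ^ (j : ℕ) * π).natDegree = m + (j : ℕ) := by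
    intro j
    rw [(monic_X_pow _).natDegree_mul hπm, natDegree_X_pow, hπd]; omega
  have htri : ((Tmat m n π).submatrix finSumFinEquiv.symm finSumFinEquiv.symm).BlockTriangular
      id := by
    intro i j hij
    show Tmat m n π (finSumFinEquiv.symm i) (finSumFinEquiv.symm j) = 0
    rcases hc : finSumFinEquiv.symm j with j₀ | j₀
    · show (if finSumFinEquiv.symm i = Sum.inl j₀ then (1:K) else 0) = 0
      rw [if_neg]
      intro h
      rw [← hc] at h
      exact absurd (finSumFinEquiv.symm.injective h) (ne_of_gt hij)
    · show ((X : Polynomial K) ^ (j₀ : ℕ) * π).coeff (dd m n (finSumFinEquiv.symm i)) = 0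
      rw [hdd]
      apply coeff_eq_zero_of_natDegree_lt
      rw [hXjd]
      have hj : j = finSumFinEquiv (Sum.inr j₀) := (Equiv.symm_apply_eq _).mp hc
      have hjv : (j : ℕ) = m + (j₀ : ℕ) := by rw [hj]; simp
      have hij' : (j : ℕ) < (i : ℕ) := hij
      omega
  rw [Matrix.det_of_upperTriangular htri]
  apply Finset.prod_eq_one
  intro i _
  show Tmat m n π (finSumFinEquiv.symm i) (finSumFinEquiv.symm i) = 1
  rcases hc : finSumFinEquiv.symm i with j₀ | j₀
  · show (if (Sum.inl j₀ : Fin m ⊕ Fin n) = Sum.inl j₀ then (1:K) else 0) = 1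
    rw [if_pos rfl]
  · show ((X : Polynomial K) ^ (j₀ : ℕ) * π).coeff (dd m n (Sum.inr j₀)) = 1
    have hmono : ((X : Polynomial K) ^ (j₀ : ℕ) * π).Monic := (monic_X_pow _).mul hπm
    have h := hmono.coeff_natDegree
    rw [hXjd] at h
    exact h

theorem det_Umat (m n : ℕ) (p : ℕ → Polynomial K) (hmonic : ∀ k, (p k).Monic)
    (hdeg : ∀ k, (p k).natDegree = k) : (Umat m n p).det = 1 := by
  rw [← Matrix.det_submatrix_equiv_self
    (finSumFinEquiv (m := m) (n := n)).symm (Umat m n p)]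
  have hdd : ∀ i : Fin (m + n), dd m n (finSumFinEquiv.symm i) = (i : ℕ) := by
    intro i; rw [dd_eq, Equiv.apply_symm_apply]
  have htri : ((Umat m n p).submatrix finSumFinEquiv.symm finSumFinEquiv.symm).BlockTriangular
      id := by
    intro i j hij
    show (p (dd m n (finSumFinEquiv.symm j))).coeff (dd m n (finSumFinEquiv.symm i)) = 0
    rw [hdd, hdd]
    apply coeff_eq_zero_of_natDegree_lt
    rw [hdeg]
    exact hij
  rw [Matrix.det_of_upperTriangular htri]
  apply Finset.prod_eq_one
  intro i _
  show (p (dd m n (finSumFinEquiv.symm i))).coeff (dd m n (finSumFinEquiv.symm i)) = 1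
  rw [hdd]
  have h := (hmonic (i : ℕ)).coeff_natDegree
  rwa [hdeg] at h

theorem FU_eq (m n : ℕ) (x : Fin m → K) (L : Polynomial K →ₗ[K] K)
    (p : ℕ → Polynomial K) (ω : ℕ → K)
    (hmonic : ∀ k, (p k).Monic) (hdeg : ∀ k, (p k).natDegree = k)
    (horth : ∀ m' n', L (p m' * p n') = if m' = n' then ω n' else 0) :
    Fmat m n x L * Urot m n p =
      fromBlocks (of fun i j : Fin m => (p (n + (j : ℕ))).eval (x i))
        (of fun (i : Fin m) (j : Fin n) => (p (j : ℕ)).eval (x i))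
        0 (of fun i j : Fin n => L (X ^ (i : ℕ) * p (j : ℕ))) := by
  have hdp : ∀ c : Fin m ⊕ Fin n, (p (dd' m n c)).natDegree < m + n := by
    intro c
    rw [hdeg]
    cases c with
    | inl j => show n + (j : ℕ) < m + n; have := j.isLt; omega
    | inr j => show (j : ℕ) < m + n; have := j.isLt; omega
  ext r c
  cases r with
  | inl i =>
    rw [Matrix.mul_apply]
    have hs : ∑ c', Fmat m n x L (Sum.inl i) c' * Urot m n p c' c
        = (p (dd' m n c)).eval (x i) := eval_dd m n _ (hdp c) (x i)
    rw [hs]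
    cases c with
    | inl j => rfl
    | inr j => rfl
  | inr i =>
    rw [Matrix.mul_apply]
    have hs : ∑ c', Fmat m n x L (Sum.inr i) c' * Urot m n p c' c
        = L (X ^ (i : ℕ) * p (dd' m n c)) := L_dd m n L (i : ℕ) _ (hdp c)
    rw [hs]
    cases c with
    | inl j =>
      have h0 : L (X ^ (i : ℕ) * p (n + (j : ℕ))) = 0 := by
        apply L_q_p L p ω hmonic hdeg horth
        rw [natDegree_X_pow]
        have := i.isLt
        omega
      exact h0
    | inr j => rfl

theorem det_W (L : Polynomial K →ₗ[K] K) (p : ℕ → Polynomial K) (ω : ℕ → K)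
    (hmonic : ∀ k, (p k).Monic) (hdeg : ∀ k, (p k).natDegree = k)
    (horth : ∀ m' n', L (p m' * p n') = if m' = n' then ω n' else 0) (n : ℕ) :
    (of fun i j : Fin n => L (X ^ (i : ℕ) * p (j : ℕ))).det = ∏ i : Fin n, ω (i : ℕ) := by
  have htri : (of fun i j : Fin n => L (X ^ (i : ℕ) * p (j : ℕ))).BlockTriangular
      OrderDual.toDual := by
    intro i j hij
    show L (X ^ (i : ℕ) * p (j : ℕ)) = 0
    apply L_q_p L p ω hmonic hdeg horth
    rw [natDegree_X_pow]
    exact hij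
  rw [Matrix.det_of_lowerTriangular _ htri]
  exact Finset.prod_congr rfl fun i _ => L_X_pow_p L p ω hmonic hdeg horth (i : ℕ)

theorem det_hankel (L : Polynomial K →ₗ[K] K) (p : ℕ → Polynomial K) (ω : ℕ → K)
    (hmonic : ∀ k, (p k).Monic) (hdeg : ∀ k, (p k).natDegree = k)
    (horth : ∀ m' n', L (p m' * p n') = if m' = n' then ω n' else 0) (n : ℕ) :
    (of fun i j : Fin n => L (X ^ ((i : ℕ) + (j : ℕ)))).det = ∏ i : Fin n, ω (i : ℕ) := by
  set S : Matrix (Fin n) (Fin n) K := of fun a j : Fin n => (p (j : ℕ)).coeff (a : ℕ) with hS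
  have hdetS : S.det = 1 := by
    have htri : S.BlockTriangular id := by
      intro a j haj
      show (p (j : ℕ)).coeff (a : ℕ) = 0
      apply coeff_eq_zero_of_natDegree_lt
      rw [hdeg]
      exact haj
    rw [Matrix.det_of_upperTriangular htri]
    apply Finset.prod_eq_one
    intro i _
    show (p (i : ℕ)).coeff (i : ℕ) = 1
    have h := (hmonic (i : ℕ)).coeff_natDegree
    rwa [hdeg] at h
  have hHS : (of fun i j : Fin n => L (X ^ ((i : ℕ) + (j : ℕ)))) * S
      = of fun (a j : Fin n) => L (X ^ (a : ℕ) * p (j : ℕ)) := by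
    ext a j
    show ∑ b : Fin n, L (X ^ ((a : ℕ) + (b : ℕ))) * (p (j : ℕ)).coeff (b : ℕ)
        = L (X ^ (a : ℕ) * p (j : ℕ))
    rw [L_expand L n (a : ℕ) (p (j : ℕ)) (by rw [hdeg]; exact j.isLt),
      ← Fin.sum_univ_eq_sum_range]
    exact Finset.sum_congr rfl fun b _ => mul_comm _ _
  have hG : Sᵀ * ((of fun i j : Fin n => L (X ^ ((i : ℕ) + (j : ℕ)))) * S)
      = Matrix.diagonal (fun i : Fin n => ω (i : ℕ)) := by
    rw [hHS]
    ext i j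
    show ∑ a : Fin n, (p (i : ℕ)).coeff (a : ℕ) * L (X ^ (a : ℕ) * p (j : ℕ)) = _
    have he := L_expand' L n (p (i : ℕ)) (p (j : ℕ)) (by rw [hdeg]; exact i.isLt)
    rw [← Fin.sum_univ_eq_sum_range] at he
    rw [← he, horth]
    by_cases hij : i = j
    · subst hij
      simp [Matrix.diagonal]
    · rw [if_neg (by exact_mod_cast fun h => hij (Fin.val_injective h)),
        Matrix.diagonal_apply_ne _ hij]
  have hdet := congrArg Matrix.det hG
  rw [Matrix.det_mul, Matrix.det_mul, Matrix.det_transpose, hdetS, Matrix.det_diagonal] at hdet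
  simpa using hdet

theorem rot_pow_val (M k : ℕ) (i : Fin (M + 1)) :
    ((((finRotate (M + 1)) ^ k) i : Fin (M + 1)) : ℕ) = ((i : ℕ) + k) % (M + 1) := by
  induction k generalizing i with
  | zero => simp [Nat.mod_eq_of_lt i.isLt]
  | succ k ih =>
    rw [pow_succ, Equiv.Perm.mul_apply, ih (finRotate (M + 1) i), finRotate_succ_apply,
      Fin.add_def, Fin.val_one']
    rw [Nat.mod_add_mod]
    have h1 : (i : ℕ) + 1 % (M + 1) + k = 1 % (M + 1) + ((i : ℕ) + k) := by omega
    rw [h1, Nat.mod_add_mod, show 1 + ((i : ℕ) + k) = (i : ℕ) + (k + 1) by omega]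

theorem sign_rot (m k : ℕ) :
    Equiv.Perm.sign ((finRotate (m + k + 1)) ^ (k + 1)) = (-1 : ℤˣ) ^ ((k + 1) * m) := by
  rw [map_pow, sign_finRotate, ← pow_mul]
  have h : (m + k) * (k + 1) = (k + 1) * m + k * (k + 1) := by ring
  have h2 : (-1 : ℤˣ) ^ (k * (k + 1)) = 1 := Even.neg_one_pow (Nat.even_mul_succ_self k)
  rw [Nat.add_sub_cancel, h, pow_add, h2, mul_one]

theorem det_Urot (m n : ℕ) (p : ℕ → Polynomial K) (hmonic : ∀ k, (p k).Monic)
    (hdeg : ∀ k, (p k).natDegree = k) :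
    (Urot m n p).det = (-1 : K) ^ (n * m) := by
  rcases n with _ | k
  · have h : Urot m 0 p = Umat m 0 p := by
      ext r c
      cases c with
      | inl j =>
        show (p (0 + (j : ℕ))).coeff _ = (p ((j : ℕ))).coeff _
        rw [Nat.zero_add]
      | inr j => exact j.elim0
    rw [h, det_Umat m 0 p hmonic hdeg]
    norm_num
  · set qperm : Equiv.Perm (Fin (m + (k + 1))) := (finRotate (m + (k + 1))) ^ (k + 1) with hq
    set ρ : Equiv.Perm (Fin m ⊕ Fin (k + 1)) :=
      Equiv.permCongr finSumFinEquiv.symm qperm with hρ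
    have hρc : ∀ c, finSumFinEquiv (ρ c) = qperm (finSumFinEquiv c) := by
      intro c
      simp [hρ, Equiv.permCongr_apply]
    have hval : ∀ i : Fin (m + (k + 1)), ((qperm i : Fin (m + (k + 1))) : ℕ)
        = ((i : ℕ) + (k + 1)) % (m + k + 1) := fun i => rot_pow_val (m + k) (k + 1) i
    have hddρ : ∀ c, dd m (k + 1) (ρ c) = dd' m (k + 1) c := by
      intro c
      rw [dd_eq, hρc, hval]
      have hdv : ((finSumFinEquiv c : Fin (m + (k + 1))) : ℕ) = dd m (k + 1) c :=
        (dd_eq _ _ c).symm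
      rw [hdv]
      cases c with
      | inl j =>
        have := j.isLt
        show ((j : ℕ) + (k + 1)) % (m + k + 1) = (k + 1) + (j : ℕ)
        rw [Nat.mod_eq_of_lt (by omega)]
        omega
      | inr j =>
        have := j.isLt
        show ((m + (j : ℕ)) + (k + 1)) % (m + k + 1) = (j : ℕ)
        rw [show (m + (j : ℕ)) + (k + 1) = (j : ℕ) + (m + k + 1) by omega,
          Nat.add_mod_right]
        exact Nat.mod_eq_of_lt (by omega)
    have hsub : Urot m (k + 1) p = (Umat m (k + 1) p).submatrix id ρ := by
      ext r c
      show (p (dd' m (k + 1) c)).coeff _ = (p (dd m (k + 1) (ρ c))).coeff _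
      rw [hddρ]
      rfl
    rw [hsub, Matrix.det_permute', det_Umat m (k + 1) p hmonic hdeg, mul_one,
      Equiv.Perm.sign_permCongr]
    rw [hq, show m + (k + 1) = m + k + 1 from rfl, sign_rot m k]
    push_cast
    norm_num [mul_comm]

end HankelAux


open Polynomial Matrix in
/-- The `k = 0` case of the main theorem: the Hankel determinant of the moments of
`p ↦ L(p(x)·∏_ℓ(x - x_ℓ))` divided by the Hankel determinant of the moments of `L` equals
`(-1)^{nm}` times `det(p_{n+j-1}(x_i))` divided by the Vandermonde product.  Stated in
cross-multiplied (polynomial) form. -/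
theorem hankel_det_linear_combination_of_moments {K : Type*} [Field K] [CharZero K]
    (L : Polynomial K →ₗ[K] K) (p : ℕ → Polynomial K) (ω : ℕ → K)
    (hmonic : ∀ n, (p n).Monic) (hdeg : ∀ n, (p n).natDegree = n)
    (horth : ∀ m' n', L (p m' * p n') = if m' = n' then ω n' else 0)
    (hω : ∀ n, ω n ≠ 0)
    (hH : ∀ n : ℕ, det (of fun i j : Fin n => L (X ^ (i.val + j.val))) ≠ 0)
    (m n : ℕ) (x : Fin m → K) :
    det (of fun i j : Fin n => L (X ^ (i.val + j.val) * ∏ ℓ, (X - C (x ℓ)))) *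
        ∏ i : Fin m, ∏ j ∈ Finset.univ.filter (fun j => i < j), (x j - x i) =
      (-1) ^ (n * m) *
        det (of fun i j : Fin m => (p (n + j.val)).eval (x i)) *
        det (of fun i j : Fin n => L (X ^ (i.val + j.val))) := by
  classical
  set π : Polynomial K := ∏ ℓ : Fin m, (X - C (x ℓ)) with hπ
  have hπm : π.Monic := monic_prod_of_monic _ _ fun ℓ _ => monic_X_sub_C _
  have hπd : π.natDegree = m := by
    rw [hπ, natDegree_prod _ _ (fun ℓ _ => X_sub_C_ne_zero _)]
    simp
  have hπ0 : ∀ i, π.eval (x i) = 0 := by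
    intro i
    rw [hπ, eval_prod]
    apply Finset.prod_eq_zero (Finset.mem_univ i)
    simp
  have h1 := congrArg Matrix.det (HankelAux.FT_eq m n x L π hπd.le hπ0)
  rw [Matrix.det_mul, HankelAux.det_Tmat m n π hπm hπd, mul_one,
    Matrix.det_fromBlocks_zero₁₂] at h1
  have h2 := congrArg Matrix.det (HankelAux.FU_eq m n x L p ω hmonic hdeg horth)
  rw [Matrix.det_mul, HankelAux.det_Urot m n p hmonic hdeg, Matrix.det_fromBlocks_zero₂₁,
    HankelAux.det_W L p ω hmonic hdeg horth n] at h2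
  have h3 := HankelAux.det_hankel L p ω hmonic hdeg horth n
  have hV : (∏ i : Fin m, ∏ j ∈ Finset.univ.filter (fun j => i < j), (x j - x i))
      = (vandermonde x).det := by
    rw [Matrix.det_vandermonde]
    exact Finset.prod_congr rfl fun i _ =>
      Finset.prod_congr (by ext j; simp) fun _ _ => rfl
  rw [hV, h3]
  have hee : (-1 : K) ^ (n * m) * (-1 : K) ^ (n * m) = 1 := by
    rw [← mul_pow]
    norm_num
  calc (of fun i j : Fin n => L (X ^ (i.val + j.val) * π)).det * (vandermonde x).det
      = (vandermonde x).det * (of fun i j : Fin n => L (X ^ (i.val + j.val) * π)).det :=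
        mul_comm _ _
    _ = (HankelAux.Fmat m n x L).det := h1.symm
    _ = (HankelAux.Fmat m n x L).det * ((-1 : K) ^ (n * m) * (-1 : K) ^ (n * m)) := by
        rw [hee, mul_one]
    _ = ((HankelAux.Fmat m n x L).det * (-1 : K) ^ (n * m)) * (-1 : K) ^ (n * m) := by ring
    _ = ((of fun i j : Fin m => (p (n + j.val)).eval (x i)).det * ∏ i : Fin n, ω (i : ℕ))
          * (-1 : K) ^ (n * m) := by rw [h2]
    _ = (-1) ^ (n * m) * (of fun i j : Fin m => (p (n + j.val)).eval (x i)).det *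
          ∏ i : Fin n, ω (i : ℕ) := by ring
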